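/- Let (X,ρ,μ) be a space of homogeneous type, let φ : X × (0,∞) → (0,∞) belong to 𝒢^dec_1 and satisfy the nearness condition, and let Φ be a strictly increasing Orlicz function of positive lower type and finite positive upper type. Then there exists a positive constant C such that for every ball B ⊆ X, the indicator 𝟏_B satisfies 1/Φ⁻¹(φ(B)) ≤ ‖𝟏_B‖_{L^{(Φ,φ)}(X)} ≤ C/Φ⁻¹(φ(B)). -/

import Mathlib

noncomputable section

open MeasureTheory Filter Set
open scoped ENNReal NNReal Topology

namespace Paper

variable {X : Type*} [MeasurableSpace X]

/-- The ball with center `x` and radius `r` for the quasi-metric `ρ`. -/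
def ball (ρ : X → X → ℝ) (x : X) (r : ℝ) : Set X := {y | ρ x y < r}

/-- `(X, ρ, μ)` is a quasi-metric measure space with quasi-triangle constant `K₀`:
`ρ` is a quasi-metric with constant `K₀` and all `ρ`-balls are `μ`-measurable. -/
structure IsQuasiMetricMeasure (ρ : X → X → ℝ) (μ : Measure X) (K₀ : ℝ) : Prop where
  nonneg : ∀ x y, 0 ≤ ρ x y
  eq_zero_iff : ∀ x y, ρ x y = 0 ↔ x = y
  symm : ∀ x y, ρ x y = ρ y x
  one_le : 1 ≤ K₀
  triangle : ∀ x y z, ρ x z ≤ K₀ * (ρ x y + ρ y z)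
  measurableSet_ball : ∀ x r, MeasurableSet (ball ρ x r)

/-- The doubling condition for `μ` with doubling constant `L ∈ [1, ∞)`. -/
def IsDoubling (ρ : X → X → ℝ) (μ : Measure X) (L : ℝ≥0∞) : Prop :=
  1 ≤ L ∧ L < ∞ ∧ ∀ (x : X) (r : ℝ), 0 < r →
    0 < μ (ball ρ x r) ∧ μ (ball ρ x (2 * r)) ≤ L * μ (ball ρ x r) ∧ μ (ball ρ x r) < ∞

/-- `Φ` is an Orlicz function (conditions imposed on `[0,∞)`). -/
structure OrliczFun (Φ : ℝ → ℝ) : Prop where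
  zero : Φ 0 = 0
  nonneg : ∀ t, 0 ≤ t → 0 ≤ Φ t
  mono : ∀ s t, 0 ≤ s → s ≤ t → Φ s ≤ Φ t
  pos : ∀ t, 0 < t → 0 < Φ t
  tendsto_atTop : Tendsto Φ atTop atTop

/-- `Φ` is of lower type `r`. -/
def LowerType (Φ : ℝ → ℝ) (r : ℝ) : Prop :=
  ∃ C : ℝ, 1 ≤ C ∧ ∀ t s : ℝ, 0 < t → 0 < s → s < 1 → Φ (s * t) ≤ C * s ^ r * Φ t

/-- `Φ` is of upper type `r`. -/
def UpperType (Φ : ℝ → ℝ) (r : ℝ) : Prop :=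
  ∃ C : ℝ, 1 ≤ C ∧ ∀ t s : ℝ, 0 < t → 1 < s → Φ (s * t) ≤ C * s ^ r * Φ t

/-- The canonical extension of `Φ` to `ℝ≥0∞`. -/
def extO (Φ : ℝ → ℝ) (t : ℝ≥0∞) : ℝ≥0∞ :=
  if t = ∞ then ∞ else ENNReal.ofReal (Φ t.toReal)

/-- The generalized inverse of `Φ`. -/
def invO (Φ : ℝ → ℝ) (u : ℝ) : ℝ :=
  sInf {t : ℝ | 0 ≤ t ∧ u ≤ Φ t}

/-- `‖f‖_{Φ,φ,B}` for the ball `B = B(x,r)`: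
the least `λ` with `μ(B)⁻¹ ∫_B Φ(|f|/λ) dμ ≤ φ(B)`. -/
def ballNorm (ρ : X → X → ℝ) (μ : Measure X) (Φ : ℝ → ℝ) (φ : X → ℝ → ℝ)
    (x : X) (r : ℝ) (g : X → ℝ≥0∞) : ℝ≥0∞ :=
  sInf {lam : ℝ≥0∞ | lam ≠ 0 ∧
    (∫⁻ y in ball ρ x r, extO Φ (g y / lam) ∂μ) ≤
      ENNReal.ofReal (φ x r) * μ (ball ρ x r)}

/-- The generalized Orlicz–Morrey quasi-norm `‖f‖_{L^{(Φ,φ)}(X)}`. -/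
def OMnorm (ρ : X → X → ℝ) (μ : Measure X) (Φ : ℝ → ℝ) (φ : X → ℝ → ℝ)
    (g : X → ℝ≥0∞) : ℝ≥0∞ :=
  ⨆ (x : X) (r : ℝ) (_ : 0 < r), ballNorm ρ μ Φ φ x r g

/-- `φ` takes values in `(0,∞)`. -/
def PhiPos (φ : X → ℝ → ℝ) : Prop := ∀ (x : X) (r : ℝ), 0 < r → 0 < φ x r

/-- The nearness condition for `φ`. -/
def Nearness (ρ : X → X → ℝ) (φ : X → ℝ → ℝ) : Prop :=
  ∃ C : ℝ, 1 ≤ C ∧ ∀ (x y : X) (r : ℝ), 0 < r → ρ x y ≤ r → φ x r ≤ C * φ y r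

/-- `φ ∈ 𝒢^dec_1`: `r ↦ μ(B(x,r))φ(x,r)` is almost increasing and
`r ↦ φ(x,r)` is almost decreasing. -/
def Gdec1 (ρ : X → X → ℝ) (μ : Measure X) (φ : X → ℝ → ℝ) : Prop :=
  ∃ C : ℝ, 1 ≤ C ∧ ∀ (x : X) (r s : ℝ), 0 < r → r ≤ s →
    μ (ball ρ x r) * ENNReal.ofReal (φ x r) ≤
        ENNReal.ofReal C * (μ (ball ρ x s) * ENNReal.ofReal (φ x s)) ∧
      φ x s ≤ C * φ x r

section Aux

variable {X : Type*} [MeasurableSpace X]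

lemma ball_mono (ρ : X → X → ℝ) (x : X) {r s : ℝ} (h : r ≤ s) :
    ball ρ x r ⊆ ball ρ x s := fun _ hw => lt_of_lt_of_le hw h

lemma ball_subset' {ρ : X → X → ℝ} {μ : Measure X} {K₀ : ℝ}
    (hX : IsQuasiMetricMeasure ρ μ K₀) (x y : X) (t : ℝ) :
    ball ρ x t ⊆ ball ρ y (K₀ * (ρ x y + t)) := by
  intro w hw
  have h1 : ρ y w ≤ K₀ * (ρ y x + ρ x w) := hX.triangle y x w
  have h2 : ρ x w < t := hw
  have h3 : ρ y x = ρ x y := hX.symm y x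
  have hK : (0:ℝ) < K₀ := lt_of_lt_of_le one_pos hX.one_le
  show ρ y w < K₀ * (ρ x y + t)
  nlinarith [hX.nonneg y x, hX.nonneg x w]

lemma doubling_iter {ρ : X → X → ℝ} {μ : Measure X} {L : ℝ≥0∞}
    (hdbl : ∀ (x : X) (r : ℝ), 0 < r → μ (ball ρ x (2*r)) ≤ L * μ (ball ρ x r))
    (k : ℕ) : ∀ (x : X) (r : ℝ), 0 < r →
      μ (ball ρ x (2^k * r)) ≤ L^k * μ (ball ρ x r) := by
  induction k with
  | zero => intro x r hr; simp
  | succ n ih =>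
    intro x r hr
    calc μ (ball ρ x (2^(n+1) * r)) = μ (ball ρ x (2^n * (2*r))) := by
          rw [show (2:ℝ)^(n+1) * r = 2^n * (2*r) by ring]
      _ ≤ L^n * μ (ball ρ x (2*r)) := ih x (2*r) (by linarith)
      _ ≤ L^n * (L * μ (ball ρ x r)) := mul_le_mul_right (hdbl x r hr) _
      _ = L^(n+1) * μ (ball ρ x r) := by ring

lemma lintegral_indicator_extO (μ : Measure X) (Φ : ℝ → ℝ) (hΦ0 : Φ 0 = 0)
    {B : Set X} (hB : MeasurableSet B) (B' : Set X) (lam : ℝ≥0∞) :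
    (∫⁻ y in B', extO Φ ((B.indicator (fun _ => (1:ℝ≥0∞))) y / lam) ∂μ) =
      extO Φ (1 / lam) * μ (B ∩ B') := by
  have h1 : ∀ y, extO Φ ((B.indicator (fun _ => (1:ℝ≥0∞))) y / lam) =
      B.indicator (fun _ => extO Φ (1 / lam)) y := by
    intro y
    by_cases hy : y ∈ B
    · simp [Set.indicator_of_mem hy, one_div]
    · simp [Set.indicator_of_notMem hy, extO, hΦ0]
  simp_rw [h1]
  rw [lintegral_indicator hB, setLIntegral_const, Measure.restrict_apply hB]

lemma invO_facts {Φ : ℝ → ℝ} (hΦ : OrliczFun Φ) {Cl rminus : ℝ} (hCl1 : 1 ≤ Cl)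
    (hrm : 0 < rminus)
    (hlow : ∀ t s : ℝ, 0 < t → 0 < s → s < 1 → Φ (s*t) ≤ Cl * s ^ rminus * Φ t)
    {u : ℝ} (hu : 0 < u) :
    0 < invO Φ u ∧ Φ (invO Φ u / 2) < u := by
  have hΦ1 : 0 < Φ 1 := hΦ.pos 1 one_pos
  have hClpos : (0:ℝ) < Cl := lt_of_lt_of_le one_pos hCl1
  have hinv : invO Φ u = sInf {t : ℝ | 0 ≤ t ∧ u ≤ Φ t} := rfl
  set S := {t : ℝ | 0 ≤ t ∧ u ≤ Φ t} with hS
  have hSne : S.Nonempty := by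
    obtain ⟨t, ht⟩ := ((hΦ.tendsto_atTop.eventually_ge_atTop u).and
      (eventually_ge_atTop 0)).exists
    exact ⟨t, ht.2, ht.1⟩
  have hSbdd : BddBelow S := ⟨0, fun t ht => ht.1⟩
  set w := u / (Cl * Φ 1) with hw
  have hwpos : 0 < w := by positivity
  have hδpos : 0 < min 1 (w ^ rminus⁻¹) := lt_min one_pos (Real.rpow_pos_of_pos hwpos _)
  have hδ : ∀ t ∈ S, min 1 (w ^ rminus⁻¹) ≤ t := by
    intro t ht
    rcases le_or_gt 1 t with h1 | h1
    · exact (min_le_left _ _).trans h1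
    · have ht0 : 0 < t := by
        rcases ht.1.lt_or_eq with h | h
        · exact h
        · exfalso
          have := ht.2
          rw [← h, hΦ.zero] at this
          linarith
      have hΦt : Φ t ≤ Cl * t ^ rminus * Φ 1 := by
        have := hlow 1 t one_pos ht0 h1
        simpa using this
      have hwt : w ≤ t ^ rminus := by
        rw [hw, div_le_iff₀ (by positivity)]
        nlinarith [ht.2]
      have h4 : w ^ rminus⁻¹ ≤ (t ^ rminus) ^ rminus⁻¹ :=
        Real.rpow_le_rpow hwpos.le hwt (by positivity)
      have h2 : (t ^ rminus) ^ rminus⁻¹ = t := by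
        rw [← Real.rpow_mul ht0.le, mul_inv_cancel₀ hrm.ne', Real.rpow_one]
      exact (min_le_right _ _).trans (h2 ▸ h4)
  have ht0pos : 0 < invO Φ u := by
    rw [hinv]
    exact lt_of_lt_of_le hδpos (le_csInf hSne hδ)
  refine ⟨ht0pos, ?_⟩
  by_contra h
  push_neg at h
  have hmem : invO Φ u / 2 ∈ S := ⟨by linarith, h⟩
  have := csInf_le hSbdd hmem
  rw [← hinv] at this
  linarith

lemma le_invO {Φ : ℝ → ℝ} (hΦmono : StrictMonoOn Φ (Set.Ici (0:ℝ)))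
    (htop : Filter.Tendsto Φ Filter.atTop Filter.atTop) {u v : ℝ} (hv : 0 ≤ v)
    (hΦv : Φ v ≤ u) : v ≤ invO Φ u := by
  by_contra h
  push_neg at h
  have hSne : {t : ℝ | 0 ≤ t ∧ u ≤ Φ t}.Nonempty := by
    obtain ⟨t, ht⟩ := ((htop.eventually_ge_atTop u).and (eventually_ge_atTop 0)).exists
    exact ⟨t, ht.2, ht.1⟩
  obtain ⟨t, ht, htv⟩ := exists_lt_of_csInf_lt hSne h
  have hlt : Φ t < Φ v := hΦmono (Set.mem_Ici.mpr ht.1) (Set.mem_Ici.mpr hv) htv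
  linarith [ht.2]

end Aux

set_option maxHeartbeats 1000000 in
theorem statement15 [Nonempty X] (ρ : X → X → ℝ) (μ : Measure X) (K₀ : ℝ) (L : ℝ≥0∞)
    (hX : IsQuasiMetricMeasure ρ μ K₀) (hL : IsDoubling ρ μ L)
    (φ : X → ℝ → ℝ) (hφpos : PhiPos φ) (hφG : Gdec1 ρ μ φ) (hφN : Nearness ρ φ)
    (Φ : ℝ → ℝ) (hΦ : OrliczFun Φ) (hΦmono : StrictMonoOn Φ (Set.Ici (0:ℝ)))
    (rminus rplus : ℝ) (hrm : 0 < rminus) (hrp : 0 < rplus) (hrr : rminus ≤ rplus)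
    (hlt : LowerType Φ rminus) (hut : UpperType Φ rplus) :
    ∃ C : ℝ, 0 < C ∧ ∀ (x : X) (r : ℝ), 0 < r →
      ENNReal.ofReal (1 / invO Φ (φ x r)) ≤
          OMnorm ρ μ Φ φ ((ball ρ x r).indicator fun _ => 1) ∧
        OMnorm ρ μ Φ φ ((ball ρ x r).indicator fun _ => 1) ≤
          ENNReal.ofReal (C / invO Φ (φ x r)) := by
  obtain ⟨CG, hCG1, hG⟩ := hφG
  obtain ⟨CN, hCN1, hN⟩ := hφN
  obtain ⟨Cl, hCl1, hlow⟩ := hlt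
  obtain ⟨hL1, hLfin, hdbl⟩ := hL
  have hK0 : (1:ℝ) ≤ K₀ := hX.one_le
  have hK0pos : (0:ℝ) < K₀ := lt_of_lt_of_le one_pos hK0
  have hCGpos : (0:ℝ) < CG := lt_of_lt_of_le one_pos hCG1
  have hCNpos : (0:ℝ) < CN := lt_of_lt_of_le one_pos hCN1
  have hClpos : (0:ℝ) < Cl := lt_of_lt_of_le one_pos hCl1
  set Lr := L.toReal with hLrdef
  have hLr1 : (1:ℝ) ≤ Lr := by
    have := ENNReal.toReal_mono hLfin.ne hL1
    simpa using this
  have hLrpos : (0:ℝ) < Lr := lt_of_lt_of_le one_pos hLr1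
  have hLL : L = ENNReal.ofReal Lr := (ENNReal.ofReal_toReal hLfin.ne).symm
  set a := K₀ * (2*K₀+1) with ha
  have ha1 : (1:ℝ) ≤ a := by nlinarith
  have h2K : 2*K₀ ≤ a := by nlinarith
  set a' := K₀ * (2*K₀ + a) with ha'
  have haa' : a ≤ a' := by nlinarith
  obtain ⟨k, hk⟩ : ∃ k : ℕ, a' ≤ 2^k := by
    obtain ⟨k, hk⟩ := exists_nat_ge a'
    refine ⟨k, hk.trans ?_⟩
    exact_mod_cast (Nat.lt_two_pow_self (n := k)).le
  set Ar := CG^2 * CN * Lr^k with hAr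
  have hArpos : (0:ℝ) < Ar := by positivity
  set Mb := max 2 (Cl * Ar) with hMb
  have hMb2 : (2:ℝ) ≤ Mb := le_max_left _ _
  have hMbpos : (0:ℝ) < Mb := by linarith
  set M := Mb ^ (rminus⁻¹ : ℝ) with hM
  have hM1 : 1 < M :=
    (Real.one_lt_rpow_iff_of_pos hMbpos).mpr (Or.inl ⟨by linarith, by positivity⟩)
  have hMpos : (0:ℝ) < M := by linarith
  have hMrm : M ^ rminus = Mb := by
    rw [hM, ← Real.rpow_mul hMbpos.le, inv_mul_cancel₀ hrm.ne', Real.rpow_one]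
  refine ⟨2*M, by linarith, ?_⟩
  intro x r hr
  have hu : 0 < φ x r := hφpos x r hr
  set u := φ x r with hudef
  set t₀ := invO Φ u with ht₀def
  obtain ⟨ht₀pos, hΦhalf⟩ := invO_facts hΦ hCl1 hrm hlow hu
  rw [← ht₀def] at ht₀pos hΦhalf
  have hBmeas : MeasurableSet (ball ρ x r) := hX.measurableSet_ball x r
  have hμpos : 0 < μ (ball ρ x r) := (hdbl x r hr).1
  have hμfin : μ (ball ρ x r) < ∞ := (hdbl x r hr).2.2
  have hdbl2 : ∀ (z : X) (t : ℝ), 0 < t → μ (ball ρ z (2*t)) ≤ L * μ (ball ρ z t) :=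
    fun z t ht => (hdbl z t ht).2.1
  have hLk : (L : ℝ≥0∞)^k = ENNReal.ofReal (Lr^k) := by
    rw [hLL, ← ENNReal.ofReal_pow hLrpos.le]
  -- key geometric estimate
  have key : ∀ (y : X) (s : ℝ), 0 < s → (ball ρ x r ∩ ball ρ y s).Nonempty →
      μ (ball ρ x r ∩ ball ρ y s) * ENNReal.ofReal u ≤
        ENNReal.ofReal Ar * (μ (ball ρ y s) * ENNReal.ofReal (φ y s)) := by
    rintro y s hs ⟨z, hz1, hz2⟩
    have hz1' : ρ x z < r := hz1
    have hz2' : ρ z y < s := by rw [hX.symm]; exact hz2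
    have hzxy : ρ x y < K₀ * (r + s) :=
      lt_of_le_of_lt (hX.triangle x z y)
        (mul_lt_mul_of_pos_left (add_lt_add hz1' hz2') hK0pos)
    have hφys : 0 < φ y s := hφpos y s hs
    have hofAr : CG * (Lr^k * (CN * (CG * φ y s))) = Ar * φ y s := by rw [hAr]; ring
    rcases le_total s r with hsr | hrs
    · -- small ball case : s ≤ r
      have har : 0 < a * r := by positivity
      have hxy' : ρ x y ≤ a * r := by
        have e1 : K₀*(r+s) ≤ K₀*(2*r) := mul_le_mul_of_nonneg_left (by linarith) hK0pos.le
        have e2 : 2*K₀*r ≤ a*r := mul_le_mul_of_nonneg_right h2K hr.le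
        linarith
      have hG1 := (hG x r (a*r) hr (le_mul_of_one_le_left hr.le ha1)).1
      have hd : μ (ball ρ x (a*r)) ≤ ENNReal.ofReal (Lr^k) * μ (ball ρ x r) := by
        calc μ (ball ρ x (a*r)) ≤ μ (ball ρ x (2^k * r)) :=
              measure_mono (ball_mono ρ x
                (mul_le_mul_of_nonneg_right (haa'.trans hk) hr.le))
          _ ≤ L^k * μ (ball ρ x r) := doubling_iter hdbl2 k x r hr
          _ = ENNReal.ofReal (Lr^k) * μ (ball ρ x r) := by rw [hLk]
      have hn := hN x y (a*r) har hxy'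
      have hdec := (hG y s (a*r) hs (hsr.trans (le_mul_of_one_le_left hr.le ha1))).2
      have hφcomp : φ x (a*r) ≤ CN * (CG * φ y s) :=
        hn.trans (mul_le_mul_of_nonneg_left hdec hCNpos.le)
      have hcan : ENNReal.ofReal u ≤ ENNReal.ofReal (Ar * φ y s) := by
        rw [← ENNReal.mul_le_mul_iff_right hμpos.ne' hμfin.ne]
        calc μ (ball ρ x r) * ENNReal.ofReal u
              ≤ ENNReal.ofReal CG * (μ (ball ρ x (a*r)) * ENNReal.ofReal (φ x (a*r))) := hG1
          _ ≤ ENNReal.ofReal CG * ((ENNReal.ofReal (Lr^k) * μ (ball ρ x r)) *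
              ENNReal.ofReal (CN * (CG * φ y s))) := by
              gcongr
          _ = μ (ball ρ x r) * (ENNReal.ofReal CG * (ENNReal.ofReal (Lr^k) *
              ENNReal.ofReal (CN * (CG * φ y s)))) := by ring
          _ = μ (ball ρ x r) * ENNReal.ofReal (Ar * φ y s) := by
              rw [← ENNReal.ofReal_mul (by positivity : (0:ℝ) ≤ Lr^k),
                ← ENNReal.ofReal_mul hCGpos.le, hofAr]
      calc μ (ball ρ x r ∩ ball ρ y s) * ENNReal.ofReal u
            ≤ μ (ball ρ y s) * ENNReal.ofReal (Ar * φ y s) :=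
            mul_le_mul' (measure_mono Set.inter_subset_right) hcan
        _ = ENNReal.ofReal Ar * (μ (ball ρ y s) * ENNReal.ofReal (φ y s)) := by
            rw [ENNReal.ofReal_mul hArpos.le]; ring
    · -- large ball case : r ≤ s
      have has : 0 < a * s := by positivity
      have hxy2 : ρ x y ≤ a * s := by
        have e1 : K₀*(r+s) ≤ K₀*(2*s) := mul_le_mul_of_nonneg_left (by linarith) hK0pos.le
        have e2 : 2*K₀*s ≤ a*s := mul_le_mul_of_nonneg_right h2K hs.le
        linarith
      have hG1 := (hG x r (a*s) hr (hrs.trans (le_mul_of_one_le_left hs.le ha1))).1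
      have hsub : ball ρ x (a*s) ⊆ ball ρ y (2^k * s) := by
        refine (ball_subset' hX x y (a*s)).trans (ball_mono ρ y ?_)
        have h1 : ρ x y ≤ 2*K₀*s := by
          have e1 : K₀*(r+s) ≤ K₀*(2*s) := mul_le_mul_of_nonneg_left (by linarith) hK0pos.le
          linarith
        have h2 : K₀ * (ρ x y + a*s) ≤ a' * s := by
          have e2 : K₀ * (ρ x y + a*s) ≤ K₀ * (2*K₀*s + a*s) :=
            mul_le_mul_of_nonneg_left (by linarith) hK0pos.le
          rw [ha']
          nlinarith [e2]
        have h3 : a' * s ≤ 2^k * s := mul_le_mul_of_nonneg_right hk hs.le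
        linarith
      have hd : μ (ball ρ x (a*s)) ≤ ENNReal.ofReal (Lr^k) * μ (ball ρ y s) := by
        calc μ (ball ρ x (a*s)) ≤ μ (ball ρ y (2^k * s)) := measure_mono hsub
          _ ≤ L^k * μ (ball ρ y s) := doubling_iter hdbl2 k y s hs
          _ = ENNReal.ofReal (Lr^k) * μ (ball ρ y s) := by rw [hLk]
      have hn := hN x y (a*s) has hxy2
      have hdec := (hG y s (a*s) hs (le_mul_of_one_le_left hs.le ha1)).2
      have hφcomp : φ x (a*s) ≤ CN * (CG * φ y s) :=
        hn.trans (mul_le_mul_of_nonneg_left hdec hCNpos.le)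
      calc μ (ball ρ x r ∩ ball ρ y s) * ENNReal.ofReal u
            ≤ μ (ball ρ x r) * ENNReal.ofReal u :=
            mul_le_mul_left (measure_mono Set.inter_subset_left) _
        _ ≤ ENNReal.ofReal CG * (μ (ball ρ x (a*s)) * ENNReal.ofReal (φ x (a*s))) := hG1
        _ ≤ ENNReal.ofReal CG * ((ENNReal.ofReal (Lr^k) * μ (ball ρ y s)) *
            ENNReal.ofReal (CN * (CG * φ y s))) := by
            gcongr
        _ = μ (ball ρ y s) * (ENNReal.ofReal CG * (ENNReal.ofReal (Lr^k) *
            ENNReal.ofReal (CN * (CG * φ y s)))) := by ring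
        _ = μ (ball ρ y s) * ENNReal.ofReal (Ar * φ y s) := by
            rw [← ENNReal.ofReal_mul (by positivity : (0:ℝ) ≤ Lr^k),
              ← ENNReal.ofReal_mul hCGpos.le, hofAr]
        _ = ENNReal.ofReal Ar * (μ (ball ρ y s) * ENNReal.ofReal (φ y s)) := by
            rw [ENNReal.ofReal_mul hArpos.le]; ring
  constructor
  · -- lower bound
    refine le_trans ?_ (le_iSup_of_le x (le_iSup_of_le r (le_iSup_of_le hr le_rfl)))
    refine le_sInf ?_
    rintro lam ⟨hlam0, hlamle⟩
    rcases eq_or_ne lam ∞ with htop | htop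
    · exact htop ▸ le_top
    rw [lintegral_indicator_extO μ Φ hΦ.zero hBmeas (ball ρ x r) lam,
      Set.inter_self] at hlamle
    have hle : extO Φ (1/lam) ≤ ENNReal.ofReal u :=
      (ENNReal.mul_le_mul_iff_left hμpos.ne' hμfin.ne).mp hlamle
    have h1lam : (1:ℝ≥0∞)/lam ≠ ∞ := by
      rw [one_div]
      exact ENNReal.inv_ne_top.mpr hlam0
    rw [extO, if_neg h1lam] at hle
    have hv : Φ ((1/lam).toReal) ≤ u := (ENNReal.ofReal_le_ofReal_iff hu.le).mp hle
    have hvle : (1/lam).toReal ≤ t₀ :=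
      le_invO hΦmono hΦ.tendsto_atTop ENNReal.toReal_nonneg hv
    have hlampos : 0 < lam.toReal := ENNReal.toReal_pos hlam0 htop
    rw [one_div, ENNReal.toReal_inv] at hvle
    have hfin : 1/t₀ ≤ lam.toReal := by
      have h := mul_le_mul_of_nonneg_left hvle hlampos.le
      rw [mul_inv_cancel₀ hlampos.ne'] at h
      rw [div_le_iff₀ ht₀pos]
      linarith
    calc ENNReal.ofReal (1/t₀) ≤ ENNReal.ofReal lam.toReal :=
          ENNReal.ofReal_le_ofReal hfin
      _ = lam := ENNReal.ofReal_toReal htop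
  · -- upper bound
    have hCt : 0 < (2*M)/t₀ := by positivity
    set lam0 := ENNReal.ofReal ((2*M)/t₀) with hlam0def
    have hlam0ne : lam0 ≠ 0 := (ENNReal.ofReal_pos.mpr hCt).ne'
    have hv0 : ((1:ℝ≥0∞)/lam0).toReal = t₀/(2*M) := by
      rw [one_div, ENNReal.toReal_inv, hlam0def, ENNReal.toReal_ofReal hCt.le, inv_div]
    have hΦsmall : Φ (t₀/(2*M)) ≤ u / Ar := by
      have h1 : t₀/(2*M) = M⁻¹ * (t₀/2) := by
        rw [inv_mul_eq_div, div_div]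
      have h2 := hlow (t₀/2) M⁻¹ (by linarith) (by positivity)
        (inv_lt_one_of_one_lt₀ hM1)
      have h3 : (M⁻¹ : ℝ) ^ rminus = Mb⁻¹ := by
        rw [Real.inv_rpow hMpos.le, hMrm]
      have hClAr : (0:ℝ) < Cl * Ar := by positivity
      have h5 : Mb⁻¹ ≤ (Cl*Ar)⁻¹ := inv_anti₀ hClAr (le_max_right _ _)
      have h6 : 0 < Φ (t₀/2) := hΦ.pos _ (by linarith)
      calc Φ (t₀/(2*M)) = Φ (M⁻¹ * (t₀/2)) := by rw [h1]
        _ ≤ Cl * M⁻¹ ^ rminus * Φ (t₀/2) := h2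
        _ = Cl * Mb⁻¹ * Φ (t₀/2) := by rw [h3]
        _ ≤ Cl * Mb⁻¹ * u :=
            mul_le_mul_of_nonneg_left hΦhalf.le (by positivity)
        _ ≤ Cl * (Cl*Ar)⁻¹ * u :=
            mul_le_mul_of_nonneg_right
              (mul_le_mul_of_nonneg_left h5 hClpos.le) hu.le
        _ = u / Ar := by
            field_simp
    have hArΦ : Ar * Φ (t₀/(2*M)) ≤ u := by
      have h := mul_le_mul_of_nonneg_left hΦsmall hArpos.le
      calc Ar * Φ (t₀/(2*M)) ≤ Ar * (u/Ar) := h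
        _ = u := by field_simp
    refine iSup_le fun y => iSup_le fun s => iSup_le fun hs => ?_
    refine sInf_le ⟨hlam0ne, ?_⟩
    rw [lintegral_indicator_extO μ Φ hΦ.zero hBmeas (ball ρ y s) lam0]
    have h1lam : (1:ℝ≥0∞)/lam0 ≠ ∞ := by
      rw [one_div]
      exact ENNReal.inv_ne_top.mpr hlam0ne
    rw [extO, if_neg h1lam, hv0]
    rcases (ball ρ x r ∩ ball ρ y s).eq_empty_or_nonempty with he | hne
    · rw [he]
      simp
    · have hkey := key y s hs hne
      have hArne0 : ENNReal.ofReal Ar ≠ 0 := (ENNReal.ofReal_pos.mpr hArpos).ne'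
      rw [← ENNReal.mul_le_mul_iff_right hArne0 ENNReal.ofReal_ne_top]
      calc ENNReal.ofReal Ar * (ENNReal.ofReal (Φ (t₀/(2*M))) *
            μ (ball ρ x r ∩ ball ρ y s))
          = ENNReal.ofReal (Ar * Φ (t₀/(2*M))) * μ (ball ρ x r ∩ ball ρ y s) := by
            rw [ENNReal.ofReal_mul hArpos.le]; ring
        _ ≤ ENNReal.ofReal u * μ (ball ρ x r ∩ ball ρ y s) :=
            mul_le_mul_left (ENNReal.ofReal_le_ofReal hArΦ) _
        _ = μ (ball ρ x r ∩ ball ρ y s) * ENNReal.ofReal u := mul_comm _ _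
        _ ≤ ENNReal.ofReal Ar * (μ (ball ρ y s) * ENNReal.ofReal (φ y s)) := hkey
        _ = ENNReal.ofReal Ar * (ENNReal.ofReal (φ y s) * μ (ball ρ y s)) := by ring
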